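/- Under the stated hypotheses (continuity of the bilinear forms a, b, c with constants M_a, M_b, M_c; coercivity of a on the kernel V⁰ with constant k_a; the inf-sup condition for b with constant k_b; and the smallness condition δ := M_a (1 + M_a/k_a) M_c / k_b² < 1), the generalized saddle-point problem has exactly one solution: there exists a unique pair (u,p) ∈ V × Q such that a(u,v) + b(v,p) = F(v) for all v ∈ V and b(u,q) − c(p,q) = G(q) for all q ∈ Q. -/

import Mathlib

open RealInnerProductSpace InnerProductSpace ContinuousLinearMap

set_option maxHeartbeats 1600000 in
/-- Existence and uniqueness of solutions to the generalized saddle-point problem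
(Theorem A.1, existence/uniqueness part). -/
theorem saddle_point_existence_uniqueness
    {V Q : Type*}
    [NormedAddCommGroup V] [InnerProductSpace ℝ V] [CompleteSpace V]
    [NormedAddCommGroup Q] [InnerProductSpace ℝ Q] [CompleteSpace Q]
    (a : V →ₗ[ℝ] V →ₗ[ℝ] ℝ) (b : V →ₗ[ℝ] Q →ₗ[ℝ] ℝ) (c : Q →ₗ[ℝ] Q →ₗ[ℝ] ℝ)
    (Ma Mb Mc ka kb : ℝ)
    (hMa : 0 < Ma) (hMb : 0 < Mb) (hMc : 0 < Mc)
    (ha : ∀ u v : V, |a u v| ≤ Ma * ‖u‖ * ‖v‖)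
    (hb : ∀ (v : V) (q : Q), |b v q| ≤ Mb * ‖v‖ * ‖q‖)
    (hc : ∀ p q : Q, |c p q| ≤ Mc * ‖p‖ * ‖q‖)
    (hka : 0 < ka)
    (hcoer : ∀ u : V, (∀ q : Q, b u q = 0) → ka * ‖u‖ ^ 2 ≤ a u u)
    (hkb : 0 < kb)
    (hinfsup : ∀ q : Q, ∃ v : V, v ≠ 0 ∧ kb * ‖v‖ * ‖q‖ ≤ b v q)
    (hδ : Ma * (1 + Ma / ka) * Mc / kb ^ 2 < 1)
    (F : V →L[ℝ] ℝ) (G : Q →L[ℝ] ℝ) :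
    ∃! up : V × Q,
      (∀ v : V, a up.1 v + b v up.2 = F v) ∧
      (∀ q : Q, b up.1 q - c up.2 q = G q) := by
  classical
  -- continuous versions of the bilinear forms
  obtain ⟨A', hA'⟩ : ∃ A' : V →L[ℝ] V →L[ℝ] ℝ, ∀ u v, A' u v = a u v :=
    ⟨LinearMap.mkContinuous₂ a Ma (fun u v => by rw [Real.norm_eq_abs]; exact ha u v),
      fun u v => rfl⟩
  obtain ⟨B', hB'⟩ : ∃ B' : V →L[ℝ] Q →L[ℝ] ℝ, ∀ v q, B' v q = b v q :=
    ⟨LinearMap.mkContinuous₂ b Mb (fun v q => by rw [Real.norm_eq_abs]; exact hb v q),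
      fun v q => rfl⟩
  obtain ⟨C', hC'⟩ : ∃ C' : Q →L[ℝ] Q →L[ℝ] ℝ, ∀ p q, C' p q = c p q :=
    ⟨LinearMap.mkContinuous₂ c Mc (fun p q => by rw [Real.norm_eq_abs]; exact hc p q),
      fun p q => rfl⟩
  have hC'norm : ∀ p, ‖C' p‖ ≤ Mc * ‖p‖ := fun p =>
    opNorm_le_bound _ (by positivity) fun q => by
      rw [Real.norm_eq_abs, hC']; exact hc p q
  -- the operator A with ⟪A u, v⟫ = a u v
  obtain ⟨A, hA_inner⟩ : ∃ A : V → V, ∀ u v, ⟪A u, v⟫_ℝ = a u v :=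
    ⟨continuousLinearMapOfBilin A', fun u v => by
      rw [continuousLinearMapOfBilin_apply, hA']⟩
  have hA_diff : ∀ x y : V, ‖A x - A y‖ ≤ Ma * ‖x - y‖ := by
    intro x y
    have hin : ∀ v, ⟪A x - A y, v⟫_ℝ = a (x - y) v := fun v => by
      rw [inner_sub_left, hA_inner, hA_inner, map_sub, LinearMap.sub_apply]
    have h2 : ‖A x - A y‖ ^ 2 ≤ Ma * ‖x - y‖ * ‖A x - A y‖ := by
      calc ‖A x - A y‖ ^ 2 = ⟪A x - A y, A x - A y⟫_ℝ := by
              rw [real_inner_self_eq_norm_mul_norm]; ring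
        _ = a (x - y) (A x - A y) := hin _
        _ ≤ |a (x - y) (A x - A y)| := le_abs_self _
        _ ≤ Ma * ‖x - y‖ * ‖A x - A y‖ := ha _ _
    rcases eq_or_lt_of_le (norm_nonneg (A x - A y)) with h0 | h0
    · rw [← h0]; positivity
    · nlinarith
  -- the operator Bt with ⟪Bt q, v⟫ = b v q, and the solution operator W for the
  -- "second equation" bilinear system
  obtain ⟨Bt, W, hBt_inner, hBt_sub, hBt_low, hW_sub, hW_eq, hW_norm, hW_surj⟩ :
      ∃ (Bt : Q → V) (W : (Q →L[ℝ] ℝ) → Q),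
        (∀ q v, ⟪Bt q, v⟫_ℝ = b v q) ∧
        (∀ p q, Bt (p - q) = Bt p - Bt q) ∧
        (∀ q, kb * ‖q‖ ≤ ‖Bt q‖) ∧
        (∀ ψ ψ', W (ψ - ψ') = W ψ - W ψ') ∧
        (∀ ψ q, ⟪Bt q, Bt (W ψ)⟫_ℝ = ψ q) ∧
        (∀ ψ, ‖Bt (W ψ)‖ ≤ ‖ψ‖ / kb) ∧
        (∀ x : V, (∀ v, (∀ q, b v q = 0) → ⟪x, v⟫_ℝ = 0) → ∃ p', Bt p' = x) := by
    set BtL : Q →ₗ[ℝ] V :=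
      { toFun := fun q => (InnerProductSpace.toDual ℝ V).symm (B'.flip q)
        map_add' := fun p q => by simp [map_add]
        map_smul' := fun r q => by simp [map_smul] } with hBtLdef
    have hBtL_inner : ∀ q v, ⟪BtL q, v⟫_ℝ = b v q := by
      intro q v
      rw [hBtLdef]
      show ⟪(InnerProductSpace.toDual ℝ V).symm (B'.flip q), v⟫_ℝ = b v q
      rw [InnerProductSpace.toDual_symm_apply]; rw [flip_apply, hB']
    have hBtL_low : ∀ q, kb * ‖q‖ ≤ ‖BtL q‖ := by
      intro q
      obtain ⟨v, hv0, hv⟩ := hinfsup q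
      have h1 : kb * ‖v‖ * ‖q‖ ≤ ⟪BtL q, v⟫_ℝ := by rw [hBtL_inner]; exact hv
      have h2 : ⟪BtL q, v⟫_ℝ ≤ ‖BtL q‖ * ‖v‖ := real_inner_le_norm _ _
      have hv0' : 0 < ‖v‖ := norm_pos_iff.mpr hv0
      have := h1.trans h2
      rw [mul_comm (‖BtL q‖) (‖v‖)] at this
      have : kb * ‖q‖ ≤ ‖BtL q‖ := by
        have h3 : kb * ‖v‖ * ‖q‖ = ‖v‖ * (kb * ‖q‖) := by ring
        rw [h3] at this
        exact le_of_mul_le_mul_left this hv0'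
      exact this
    have hBtL_le : ∀ q, ‖BtL q‖ ≤ Mb * ‖q‖ := by
      intro q
      have : ‖BtL q‖ = ‖B'.flip q‖ := by
        rw [hBtLdef]; exact (InnerProductSpace.toDual ℝ V).symm.norm_map _
      rw [this]
      refine opNorm_le_bound _ (by positivity) fun v => ?_
      rw [flip_apply, Real.norm_eq_abs, hB']
      calc |b v q| ≤ Mb * ‖v‖ * ‖q‖ := hb v q
        _ = Mb * ‖q‖ * ‖v‖ := by ring
    -- the bilinear form s p q = ⟪Bt p, Bt q⟫ is coercive
    set sB : Q →L[ℝ] Q →L[ℝ] ℝ := LinearMap.mkContinuous₂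
      (LinearMap.mk₂ ℝ (fun p q => ⟪BtL p, BtL q⟫_ℝ)
        (fun p p' q => by simp [inner_add_left])
        (fun r p q => by simp [real_inner_smul_left])
        (fun p q q' => by simp [inner_add_right])
        (fun r p q => by simp [real_inner_smul_right]))
      (Mb * Mb) (fun p q => by
        rw [LinearMap.mk₂_apply, Real.norm_eq_abs]
        calc |⟪BtL p, BtL q⟫_ℝ| ≤ ‖BtL p‖ * ‖BtL q‖ := abs_real_inner_le_norm _ _
          _ ≤ (Mb * ‖p‖) * (Mb * ‖q‖) := by
              apply mul_le_mul (hBtL_le p) (hBtL_le q) (norm_nonneg _) (by positivity)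
          _ = Mb * Mb * ‖p‖ * ‖q‖ := by ring) with hsBdef
    have hsB_app : ∀ p q, sB p q = ⟪BtL p, BtL q⟫_ℝ := fun p q => rfl
    have hsB_coer : IsCoercive sB := by
      refine ⟨kb * kb, by positivity, fun q => ?_⟩
      rw [hsB_app, real_inner_self_eq_norm_mul_norm]
      nlinarith [hBtL_low q, mul_nonneg hkb.le (norm_nonneg q), norm_nonneg (BtL q)]
    set ES := hsB_coer.continuousLinearEquivOfBilin with hESdef
    set W : (Q →L[ℝ] ℝ) → Q := fun ψ => ES.symm ((InnerProductSpace.toDual ℝ Q).symm ψ)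
      with hWdef
    have hW_eq : ∀ ψ q, ⟪BtL q, BtL (W ψ)⟫_ℝ = ψ q := by
      intro ψ q
      have h1 : ⟪ES (W ψ), q⟫_ℝ = sB (W ψ) q :=
        hsB_coer.continuousLinearEquivOfBilin_apply _ _
      have h2 : ES (W ψ) = (InnerProductSpace.toDual ℝ Q).symm ψ := by
        simp only [hWdef]
        exact ContinuousLinearEquiv.apply_symm_apply _ _
      rw [h2, InnerProductSpace.toDual_symm_apply, hsB_app] at h1
      rw [real_inner_comm]
      exact h1.symm
    have hW_norm : ∀ ψ, ‖BtL (W ψ)‖ ≤ ‖ψ‖ / kb := by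
      intro ψ
      have h1 : ⟪BtL (W ψ), BtL (W ψ)⟫_ℝ = ψ (W ψ) := by
        rw [real_inner_comm]; exact hW_eq ψ (W ψ)
      have h2 : ‖BtL (W ψ)‖ * ‖BtL (W ψ)‖ = ψ (W ψ) := by
        rw [← real_inner_self_eq_norm_mul_norm]; exact h1
      have h3 : ψ (W ψ) ≤ ‖ψ‖ * ‖W ψ‖ := by
        calc ψ (W ψ) ≤ |ψ (W ψ)| := le_abs_self _
          _ = ‖ψ (W ψ)‖ := (Real.norm_eq_abs _).symm
          _ ≤ ‖ψ‖ * ‖W ψ‖ := le_opNorm _ _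
      have h4 : kb * ‖W ψ‖ ≤ ‖BtL (W ψ)‖ := hBtL_low _
      rcases eq_or_lt_of_le (norm_nonneg (BtL (W ψ))) with h0 | h0
      · rw [← h0]; positivity
      · rw [le_div_iff₀ hkb]
        nlinarith [norm_nonneg (W ψ), (opNorm_nonneg ψ)]
    have hW_surj : ∀ x : V, (∀ v, (∀ q, b v q = 0) → ⟪x, v⟫_ℝ = 0) → ∃ p', BtL p' = x := by
      intro x hx
      refine ⟨W (B' x), ?_⟩
      set d := BtL (W (B' x)) - x with hd
      have h1 : ∀ q, ⟪BtL q, d⟫_ℝ = 0 := by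
        intro q
        rw [hd, inner_sub_right, hW_eq, hBtL_inner, hB', sub_self]
      have hdK : ∀ q, b d q = 0 := fun q => by rw [← hBtL_inner]; exact h1 q
      have h2 : ⟪x, d⟫_ℝ = 0 := hx d hdK
      have h3 : ⟪BtL (W (B' x)), d⟫_ℝ = 0 := by rw [hBtL_inner]; exact hdK _
      have h4 : ⟪d, d⟫_ℝ = 0 := by rw [hd, inner_sub_left, h3, h2, sub_self]
      have h5 : d = 0 := by rwa [inner_self_eq_zero] at h4
      rw [hd] at h5; exact (sub_eq_zero.mp h5)
    exact ⟨fun q => BtL q, W, hBtL_inner, fun p q => map_sub BtL p q, hBtL_low,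
      fun ψ ψ' => by rw [hWdef]; simp [map_sub], hW_eq, hW_norm, hW_surj⟩
  -- Riesz representative of F
  obtain ⟨f, hf⟩ : ∃ f : V, ∀ v, ⟪f, v⟫_ℝ = F v :=
    ⟨(InnerProductSpace.toDual ℝ V).symm F, fun v =>
      InnerProductSpace.toDual_symm_apply⟩
  -- the solution operator for given p : solve b(u, ·) = φ, a(u, v) = F(v) on V⁰
  obtain ⟨U, hU_b, hU_a, hU_diff⟩ :
      ∃ U : (Q →L[ℝ] ℝ) → V,
        (∀ φ q, b (U φ) q = φ q) ∧
        (∀ φ v, (∀ q, b v q = 0) → a (U φ) v = F v) ∧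
        (∀ φ φ', ‖U φ - U φ'‖ ≤ (1 + Ma / ka) * (‖φ - φ'‖ / kb)) := by
    set KS : Submodule ℝ V := ⨅ q : Q, LinearMap.ker (B'.flip q : V →ₗ[ℝ] ℝ) with hKSdef
    have hKS_mem : ∀ v : V, v ∈ KS ↔ ∀ q, b v q = 0 := by
      intro v
      rw [hKSdef]
      simp only [Submodule.mem_iInf, LinearMap.mem_ker, ContinuousLinearMap.coe_coe]
      constructor
      · intro h q; have := h q; rwa [flip_apply, hB'] at this
      · intro h q; rw [flip_apply, hB']; exact h q
    have hKS_closed : IsClosed (KS : Set V) := by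
      have : (KS : Set V) = ⋂ q : Q, (LinearMap.ker (B'.flip q : V →ₗ[ℝ] ℝ) : Set V) := by
        rw [hKSdef]; exact_mod_cast Submodule.coe_iInf _
      rw [this]
      exact isClosed_iInter fun q => ContinuousLinearMap.isClosed_ker (B'.flip q)
    haveI : CompleteSpace KS := hKS_closed.completeSpace_coe
    set ι := KS.subtypeL with hιdef
    set a₀ : KS →L[ℝ] KS →L[ℝ] ℝ := ((A'.comp ι).flip.comp ι).flip with ha₀def
    have ha₀_app : ∀ u v : KS, a₀ u v = a (u : V) (v : V) := by
      intro u v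
      rw [ha₀def]
      simp only [flip_apply, comp_apply, hιdef, Submodule.subtypeL_apply]
      rw [hA']
    have hcoer₀ : IsCoercive a₀ := by
      refine ⟨ka, hka, fun u => ?_⟩
      rw [ha₀_app]
      have hmem := (hKS_mem (u : V)).mp u.2
      have h1 := hcoer (u : V) hmem
      calc ka * ‖u‖ * ‖u‖ = ka * ‖(u : V)‖ ^ 2 := by rw [Submodule.coe_norm]; ring
        _ ≤ a (u : V) (u : V) := h1
    set E0 := hcoer₀.continuousLinearEquivOfBilin with hE0def
    set sol : (KS →L[ℝ] ℝ) → KS :=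
      fun L => E0.symm ((InnerProductSpace.toDual ℝ KS).symm L) with hsoldef
    have hsol_eq : ∀ L (v : KS), a (sol L : V) (v : V) = L v := by
      intro L v
      rw [← ha₀_app]
      have h1 : ⟪E0 (sol L), v⟫_ℝ = a₀ (sol L) v :=
        hcoer₀.continuousLinearEquivOfBilin_apply _ _
      rw [hsoldef] at h1
      simp only [ContinuousLinearEquiv.apply_symm_apply] at h1
      rw [InnerProductSpace.toDual_symm_apply] at h1
      rw [hsoldef]; exact h1.symm
    have hsol_norm : ∀ L, ‖sol L‖ ≤ ‖L‖ / ka := by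
      intro L
      have h1 : ka * ‖sol L‖ * ‖sol L‖ ≤ a (sol L : V) (sol L : V) := by
        have hmem := (hKS_mem ((sol L : V))).mp (sol L).2
        have h0 := hcoer (sol L : V) hmem
        calc ka * ‖sol L‖ * ‖sol L‖ = ka * ‖((sol L) : V)‖ ^ 2 := by
              rw [Submodule.coe_norm]; ring
          _ ≤ _ := h0
      rw [hsol_eq] at h1
      have h2 : L (sol L) ≤ ‖L‖ * ‖sol L‖ := by
        calc L (sol L) ≤ |L (sol L)| := le_abs_self _
          _ = ‖L (sol L)‖ := (Real.norm_eq_abs _).symm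
          _ ≤ ‖L‖ * ‖sol L‖ := le_opNorm _ _
      rcases eq_or_lt_of_le (norm_nonneg (sol L)) with h0 | h0
      · rw [← h0]; positivity
      · rw [le_div_iff₀ hka]
        nlinarith [opNorm_nonneg L]
    have hsol_sub : ∀ L L', sol (L - L') = sol L - sol L' := by
      intro L L'; rw [hsoldef]; simp [map_sub]
    set u1 : (Q →L[ℝ] ℝ) → V := fun φ => Bt (W φ) with hu1def
    set Lf : (Q →L[ℝ] ℝ) → (KS →L[ℝ] ℝ) := fun φ => (F - A' (u1 φ)).comp ι with hLfdef
    have hu1_b : ∀ φ q, b (u1 φ) q = φ q := by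
      intro φ q
      rw [hu1def]
      rw [← hBt_inner]
      exact hW_eq φ q
    have hu1_sub : ∀ φ φ', u1 φ - u1 φ' = Bt (W (φ - φ')) := by
      intro φ φ'
      rw [hu1def]
      show Bt (W φ) - Bt (W φ') = Bt (W (φ - φ'))
      rw [hW_sub, hBt_sub]
    refine ⟨fun φ => (sol (Lf φ) : V) + u1 φ, ?_, ?_, ?_⟩
    · intro φ q
      rw [map_add, LinearMap.add_apply]
      have h1 : b ((sol (Lf φ) : V)) q = 0 := (hKS_mem _).mp (sol (Lf φ)).2 q
      rw [h1, hu1_b, zero_add]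
    · intro φ v hv
      set v' : KS := ⟨v, (hKS_mem v).mpr hv⟩ with hv'def
      have hvv : (v' : V) = v := rfl
      rw [map_add, LinearMap.add_apply]
      have h1 : a ((sol (Lf φ)) : V) v = Lf φ v' := by
        rw [← hvv]; exact hsol_eq _ _
      rw [h1, hLfdef]
      simp only [comp_apply, sub_apply, hιdef, Submodule.subtypeL_apply, hvv]
      rw [hA']
      ring
    · intro φ φ'
      have h1 : ‖u1 φ - u1 φ'‖ ≤ ‖φ - φ'‖ / kb := by
        rw [hu1_sub]; exact hW_norm _
      have h3 : Lf φ - Lf φ' = (A' (u1 φ' - u1 φ)).comp ι := by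
        rw [hLfdef]
        ext v
        simp only [comp_apply, sub_apply, map_sub]
        ring
      have h4 : ‖(A' (u1 φ' - u1 φ)).comp ι‖ ≤ Ma * ‖u1 φ' - u1 φ‖ := by
        refine opNorm_le_bound _ (by positivity) fun v => ?_
        simp only [comp_apply, hιdef, Submodule.subtypeL_apply]
        rw [Real.norm_eq_abs, hA']
        have : ‖(v : V)‖ = ‖v‖ := rfl
        calc |a (u1 φ' - u1 φ) (v : V)| ≤ Ma * ‖u1 φ' - u1 φ‖ * ‖(v : V)‖ := ha _ _
          _ = Ma * ‖u1 φ' - u1 φ‖ * ‖v‖ := by rw [this]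
      have h5 : ‖sol (Lf φ) - sol (Lf φ')‖ ≤ Ma * (‖φ - φ'‖ / kb) / ka := by
        rw [← hsol_sub]
        calc ‖sol (Lf φ - Lf φ')‖ ≤ ‖Lf φ - Lf φ'‖ / ka := hsol_norm _
          _ = ‖(A' (u1 φ' - u1 φ)).comp ι‖ / ka := by rw [h3]
          _ ≤ Ma * ‖u1 φ' - u1 φ‖ / ka := by gcongr
          _ = Ma * ‖u1 φ - u1 φ'‖ / ka := by rw [norm_sub_rev]
          _ ≤ Ma * (‖φ - φ'‖ / kb) / ka := by gcongr
      have hcoe : ((sol (Lf φ) : V) + u1 φ) - ((sol (Lf φ') : V) + u1 φ') =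
          ((sol (Lf φ) - sol (Lf φ') : KS) : V) + (u1 φ - u1 φ') := by
        push_cast
        abel
      calc ‖((sol (Lf φ) : V) + u1 φ) - ((sol (Lf φ') : V) + u1 φ')‖
          = ‖((sol (Lf φ) - sol (Lf φ') : KS) : V) + (u1 φ - u1 φ')‖ := by rw [hcoe]
        _ ≤ ‖((sol (Lf φ) - sol (Lf φ') : KS) : V)‖ + ‖u1 φ - u1 φ'‖ := norm_add_le _ _
        _ = ‖sol (Lf φ) - sol (Lf φ')‖ + ‖u1 φ - u1 φ'‖ := by rw [Submodule.coe_norm]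
        _ ≤ Ma * (‖φ - φ'‖ / kb) / ka + ‖φ - φ'‖ / kb := add_le_add h5 h1
        _ = (1 + Ma / ka) * (‖φ - φ'‖ / kb) := by field_simp; ring
  -- uniqueness of the solution operator U
  have hU_unique : ∀ (φ : Q →L[ℝ] ℝ) (w : V), (∀ q, b w q = φ q) →
      (∀ v, (∀ q, b v q = 0) → a w v = F v) → w = U φ := by
    intro φ w hwb hwa
    have hd_b : ∀ q, b (w - U φ) q = 0 := by
      intro q
      rw [map_sub, LinearMap.sub_apply, hwb q, hU_b φ q, sub_self]
    have hd_a : a (w - U φ) (w - U φ) = 0 := by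
      rw [show a (w - U φ) = a w - a (U φ) from map_sub a w (U φ),
        LinearMap.sub_apply, hwa _ hd_b, hU_a φ _ hd_b, sub_self]
    have h1 := hcoer (w - U φ) hd_b
    rw [hd_a] at h1
    have h3 : ‖w - U φ‖ ^ 2 ≤ 0 := by nlinarith
    have h2 : ‖w - U φ‖ = 0 :=
      pow_eq_zero_iff (n := 2) (by norm_num) |>.mp (le_antisymm h3 (sq_nonneg _))
    rw [norm_eq_zero, sub_eq_zero] at h2
    exact h2
  -- the solution of the "state" equation for a given p
  set u : Q → V := fun p => U (G + C' p) with hudef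
  have hu_b : ∀ p q, b (u p) q = G q + c p q := by
    intro p q
    have h1 := hU_b (G + C' p) q
    rw [hudef]
    simpa [add_apply, hC'] using h1
  have hu_a : ∀ p v, (∀ q, b v q = 0) → a (u p) v = F v := fun p v hv => hU_a _ v hv
  have hu_diff : ∀ p p', ‖u p - u p'‖ ≤ (1 + Ma / ka) * (Mc * ‖p - p'‖ / kb) := by
    intro p p'
    have h1 : (G + C' p) - (G + C' p') = C' (p - p') := by rw [map_sub]; abel
    have h2 := hU_diff (G + C' p) (G + C' p')
    rw [h1] at h2
    have h3 : ‖C' (p - p')‖ ≤ Mc * ‖p - p'‖ := hC'norm _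
    calc ‖u p - u p'‖ ≤ (1 + Ma / ka) * (‖C' (p - p')‖ / kb) := h2
      _ ≤ (1 + Ma / ka) * (Mc * ‖p - p'‖ / kb) := by gcongr
  -- the fixed-point map T
  have hρ : ∀ p : Q, ∀ v, (∀ q, b v q = 0) → ⟪f - A (u p), v⟫_ℝ = 0 := by
    intro p v hv
    rw [inner_sub_left, hf, hA_inner, hu_a p v hv, sub_self]
  choose T hT using fun p => hW_surj (f - A (u p)) (hρ p)
  set δ := Ma * (1 + Ma / ka) * Mc / kb ^ 2 with hδdef
  have hδ0 : 0 ≤ δ := by positivity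
  have hT_contract : ∀ p p', ‖T p - T p'‖ ≤ δ * ‖p - p'‖ := by
    intro p p'
    have h1 : kb * ‖T p - T p'‖ ≤ ‖Bt (T p - T p')‖ := hBt_low _
    rw [hBt_sub, hT, hT] at h1
    have h2 : (f - A (u p)) - (f - A (u p')) = A (u p') - A (u p) := by abel
    rw [h2] at h1
    have h3 := hA_diff (u p') (u p)
    have h4 := hu_diff p' p
    have h5 : kb * ‖T p - T p'‖ ≤ Ma * ((1 + Ma / ka) * (Mc * ‖p' - p‖ / kb)) := by
      calc kb * ‖T p - T p'‖ ≤ ‖A (u p') - A (u p)‖ := h1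
        _ ≤ Ma * ‖u p' - u p‖ := h3
        _ ≤ Ma * ((1 + Ma / ka) * (Mc * ‖p' - p‖ / kb)) := by gcongr
    rw [norm_sub_rev p' p] at h5
    have h6 : Ma * ((1 + Ma / ka) * (Mc * ‖p - p'‖ / kb)) = kb * (δ * ‖p - p'‖) := by
      rw [hδdef]; field_simp
    rw [h6] at h5
    exact le_of_mul_le_mul_left h5 hkb
  haveI : Nonempty Q := ⟨0⟩
  have hcontr : ContractingWith ⟨δ, hδ0⟩ T := by
    constructor
    · exact (NNReal.coe_lt_coe (r₁ := ⟨δ, hδ0⟩) (r₂ := 1)).mp hδ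
    · refine LipschitzWith.of_dist_le_mul fun p p' => ?_
      rw [dist_eq_norm, dist_eq_norm]
      exact_mod_cast hT_contract p p'
  set ps := ContractingWith.fixedPoint T hcontr with hpsdef
  have hps : T ps = ps := hcontr.fixedPoint_isFixedPt
  refine ⟨(u ps, ps), ⟨?_, ?_⟩, ?_⟩
  · intro v
    have h1 : ⟪Bt (T ps), v⟫_ℝ = F v - a (u ps) v := by
      rw [hT, inner_sub_left, hf, hA_inner]
    rw [hps] at h1
    rw [hBt_inner] at h1
    show a (u ps) v + b v ps = F v
    rw [h1]; ring
  · intro q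
    show b (u ps) q - c ps q = G q
    rw [hu_b]; ring
  · rintro ⟨w, p⟩ ⟨h1, h2⟩
    simp only at h1 h2
    have hwb : ∀ q, b w q = (G + C' p) q := by
      intro q
      rw [add_apply, hC']
      have := h2 q
      linarith
    have hwa : ∀ v, (∀ q, b v q = 0) → a w v = F v := by
      intro v hv
      have h3 := h1 v
      rw [hv p] at h3
      linarith
    have hw : w = u p := hU_unique _ w hwb hwa
    have hbtp : Bt p = f - A (u p) := by
      have h4 : ∀ v, ⟪Bt p - (f - A (u p)), v⟫_ℝ = 0 := by
        intro v
        rw [inner_sub_left, hBt_inner, inner_sub_left, hf, hA_inner]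
        have h5 := h1 v
        rw [hw] at h5
        linarith
      have h6 := h4 (Bt p - (f - A (u p)))
      rw [inner_self_eq_zero] at h6
      exact sub_eq_zero.mp h6
    have hfix : Function.IsFixedPt T p := by
      have h3 : Bt (T p - p) = 0 := by rw [hBt_sub, hT, hbtp, sub_self]
      have h4 := hBt_low (T p - p)
      rw [h3, norm_zero] at h4
      have h5 : ‖T p - p‖ = 0 := le_antisymm (by nlinarith) (norm_nonneg _)
      rw [norm_eq_zero, sub_eq_zero] at h5
      exact h5
    have hpp : p = ps := hcontr.fixedPoint_unique hfix
    have : w = u ps := by rw [hw, hpp]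
    rw [Prod.mk.injEq]
    exact ⟨this, hpp⟩
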